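/- arXiv:2205.06394 — 11 statements merged into one kernel-verified Lean document; each statement's English description precedes it below -/
import Mathlib

section
/- For real numbers k ≥ 1, t ≥ k, and 0 ≤ x ≤ 1/2, we have (1+t)^x ≥ (1/2)^x + ((1+k)^x - (1/2)^x)/k^x · t^x. -/
theorem lemma1_part1 (k t x : ℝ) (hk : 1 ≤ k) (ht : k ≤ t)
    (hx0 : 0 ≤ x) (hx : x ≤ 1 / 2) :
    (1 + t) ^ x ≥ (1 / 2 : ℝ) ^ x + ((1 + k) ^ x - (1 / 2 : ℝ) ^ x) / k ^ x * t ^ x := by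
  have hk0 : (0:ℝ) < k := lt_of_lt_of_le one_pos hk
  have ht0 : (0:ℝ) < t := lt_of_lt_of_le hk0 ht
  set a := k * t with ha
  have ha0 : 0 < a := mul_pos hk0 ht0
  have hat : t ≤ a := le_mul_of_one_le_left ht0.le hk
  have key : (a + t)^x - (t/2)^x ≤ (a + k)^x - (k/2)^x := by
    have hD : ∀ u ∈ Set.Ioo k t, HasDerivAt (fun u : ℝ => (a+u)^x - (u/2)^x)
        (x * (a+u)^(x-1) - x * (u/2)^(x-1) * (1/2)) u := by
      intro u hu
      have hu0 : (0:ℝ) < u := lt_of_lt_of_le one_pos (hk.trans hu.1.le)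
      have hau : (0:ℝ) < a + u := by linarith
      have h1 : HasDerivAt (fun u : ℝ => (a+u)^x) (x * (a+u)^(x-1)) u := by
        have h := (Real.hasDerivAt_rpow_const (x := a + u) (p := x)
          (Or.inl hau.ne')).comp u ((hasDerivAt_id u).const_add a)
        simpa [Function.comp_def] using h
      have h2 : HasDerivAt (fun u : ℝ => (u/2)^x) (x * (u/2)^(x-1) * (1/2)) u := by
        have h := (Real.hasDerivAt_rpow_const (x := u / 2) (p := x)
          (Or.inl (by positivity))).comp u ((hasDerivAt_id u).div_const 2)
        simpa [Function.comp_def] using h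
      exact h1.sub h2
    have hmono : AntitoneOn (fun u : ℝ => (a+u)^x - (u/2)^x) (Set.Icc k t) := by
      apply antitoneOn_of_deriv_nonpos (convex_Icc k t)
      · apply ContinuousOn.sub
        · exact (continuousOn_const.add continuousOn_id).rpow_const
            (fun u hu => Or.inr hx0)
        · exact (continuousOn_id.div_const 2).rpow_const (fun u hu => Or.inr hx0)
      · intro u hu
        rw [interior_Icc] at hu
        exact ((hD u hu).differentiableAt).differentiableWithinAt
      · intro u hu
        rw [interior_Icc] at hu
        rw [(hD u hu).deriv]
        have hu0 : (0:ℝ) < u := lt_of_lt_of_le one_pos (hk.trans hu.1.le)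
        have hau : (0:ℝ) < a + u := by linarith
        have hu2 : (0:ℝ) < u/2 := by positivity
        -- key derivative bound : (a+u)^(x-1) ≤ (u/2)^(x-1) * (1/2)
        have hr : (a+u)^(x-1) ≤ (u/2)^(x-1) * (1/2) := by
          set r := (a+u)/(u/2) with hrdef
          have hr4 : (4:ℝ) ≤ r := by
            rw [hrdef, le_div_iff₀ hu2]
            have : u ≤ a := le_trans hu.2.le hat
            linarith
          have hr0 : (0:ℝ) < r := by linarith
          have hrx : (2:ℝ) ≤ r^(1-x) := by
            calc (2:ℝ) = 4 ^ ((1:ℝ)/2) := by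
                  rw [show (4:ℝ) = 2^(2:ℕ) by norm_num, ← Real.rpow_natCast 2 2,
                    ← Real.rpow_mul (by norm_num)]
                  norm_num
              _ ≤ 4 ^ (1-x) := Real.rpow_le_rpow_of_exponent_le (by norm_num) (by linarith)
              _ ≤ r ^ (1-x) := Real.rpow_le_rpow (by norm_num) hr4 (by linarith)
          have hsplit : (a+u)^(x-1) = (u/2)^(x-1) * r^(x-1) := by
            rw [← Real.mul_rpow hu2.le (by positivity)]
            rw [hrdef]
            congr 1
            field_simp
          rw [hsplit]
          have hrneg : r^(x-1) ≤ 1/2 := by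
            have : r^(x-1) = (r^(1-x))⁻¹ := by
              rw [← Real.rpow_neg hr0.le]
              ring_nf
            rw [this]
            rw [inv_le_comm₀ (by linarith) (by norm_num)]
            simpa using hrx
          have hp : (0:ℝ) < (u/2)^(x-1) := Real.rpow_pos_of_pos hu2 _
          calc (u/2)^(x-1) * r^(x-1) ≤ (u/2)^(x-1) * (1/2) := by
                exact mul_le_mul_of_nonneg_left hrneg hp.le
            _ = (u/2)^(x-1) * (1/2) := rfl
        nlinarith [Real.rpow_pos_of_pos hau (x-1), Real.rpow_pos_of_pos hu2 (x-1)]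
    exact hmono (Set.mem_Icc.2 ⟨le_refl k, ht⟩) (Set.mem_Icc.2 ⟨ht, le_refl t⟩) ht
  have e1 : (a+k)^x = k^x * (1+t)^x := by
    rw [ha, show k*t + k = k*(1+t) by ring, Real.mul_rpow hk0.le (by linarith)]
  have e2 : (a+t)^x = t^x * (1+k)^x := by
    rw [ha, show k*t + t = t*(1+k) by ring, Real.mul_rpow ht0.le (by linarith)]
  have e3 : (k/2)^x = k^x * (1/2:ℝ)^x := by
    rw [show k/2 = k*(1/2) by ring, Real.mul_rpow hk0.le (by norm_num)]
  have e4 : (t/2)^x = t^x * (1/2:ℝ)^x := by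
    rw [show t/2 = t*(1/2) by ring, Real.mul_rpow ht0.le (by norm_num)]
  rw [e1, e2, e3, e4] at key
  have hkx : (0:ℝ) < k^x := Real.rpow_pos_of_pos hk0 x
  have hdiv : (t^x*(1+k)^x - t^x*(1/2:ℝ)^x)/k^x ≤ (1+t)^x - (1/2:ℝ)^x := by
    rw [div_le_iff₀ hkx]
    nlinarith [key]
  have heq : ((1+k)^x - (1/2:ℝ)^x)/k^x * t^x = (t^x*(1+k)^x - t^x*(1/2:ℝ)^x)/k^x := by
    ring
  linarith [hdiv, heq.le, heq.ge]
end

section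
/- For real numbers k ≥ 1, t ≥ k, and x ≥ 1, we have (1+t)^x ≤ (1/2)^x + ((1+k)^x - (1/2)^x)/k^x · t^x. -/
/-- Key lemma: for a convex power function, shifting an interval to the right
increases the difference of values. -/
lemma key_shift (b a s x : ℝ) (hb : 0 ≤ b) (hba : b ≤ a) (hs : 0 ≤ s) (hx : 1 ≤ x) :
    a ^ x + (b + s) ^ x ≤ b ^ x + (a + s) ^ x := by
  have hf := convexOn_rpow hx
  rcases eq_or_lt_of_le (show b ≤ a + s by linarith) with hd | hd
  · have ha : a = b := by nlinarith
    have hs0 : s = 0 := by nlinarith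
    subst ha; subst hs0; simp
  · set d : ℝ := a + s - b with hdef
    have hd0 : 0 < d := by simp [hdef]; linarith
    have hbI : b ∈ Set.Ici (0 : ℝ) := hb
    have hasI : a + s ∈ Set.Ici (0 : ℝ) := by simp; linarith
    have h1 : a ^ x ≤ (s / d) * b ^ x + ((a - b) / d) * (a + s) ^ x := by
      have := hf.2 hbI hasI (show 0 ≤ s / d by positivity)
        (show 0 ≤ (a - b) / d by apply div_nonneg <;> linarith)
        (by field_simp; rw [hdef]; ring)
      have heq : (s / d) • b + ((a - b) / d) • (a + s) = a := by
        simp only [smul_eq_mul]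
        rw [div_mul_eq_mul_div, div_mul_eq_mul_div, ← add_div, div_eq_iff (ne_of_gt hd0), hdef]
        ring
      rw [heq] at this
      simpa using this
    have h2 : (b + s) ^ x ≤ ((a - b) / d) * b ^ x + (s / d) * (a + s) ^ x := by
      have := hf.2 hbI hasI (show 0 ≤ (a - b) / d by apply div_nonneg <;> linarith)
        (show 0 ≤ s / d by positivity)
        (by field_simp; rw [hdef]; ring)
      have heq : ((a - b) / d) • b + (s / d) • (a + s) = b + s := by
        simp only [smul_eq_mul]
        rw [div_mul_eq_mul_div, div_mul_eq_mul_div, ← add_div, div_eq_iff (ne_of_gt hd0), hdef]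
        ring
      rw [heq] at this
      simpa using this
    have hsum : (s / d) + (a - b) / d = 1 := by field_simp; rw [hdef]; ring
    have hB : s / d * b ^ x + (a - b) / d * b ^ x = b ^ x := by
      rw [← add_mul, hsum, one_mul]
    have hA : s / d * (a + s) ^ x + (a - b) / d * (a + s) ^ x = (a + s) ^ x := by
      rw [← add_mul, hsum, one_mul]
    linarith [h1, h2, hB, hA]

theorem lemma1_part2 (k t x : ℝ) (hk : 1 ≤ k) (ht : k ≤ t) (hx : 1 ≤ x) :
    (1 + t) ^ x ≤ (1 / 2 : ℝ) ^ x + ((1 + k) ^ x - (1 / 2 : ℝ) ^ x) / k ^ x * t ^ x := by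
  have hk0 : (0 : ℝ) < k := by linarith
  have ht0 : (0 : ℝ) < t := by linarith
  have hkx : (0 : ℝ) < k ^ x := Real.rpow_pos_of_pos hk0 x
  -- key inequality with b = k, a = t, s = k * t
  have hkey : t ^ x + (k + k * t) ^ x ≤ k ^ x + (t + k * t) ^ x :=
    key_shift k t (k * t) x (le_of_lt hk0) ht (by positivity) hx
  -- (1/2)^x ≤ 1
  have hhalf : (1 / 2 : ℝ) ^ x ≤ 1 := by
    calc (1 / 2 : ℝ) ^ x ≤ 1 ^ x := by
          apply Real.rpow_le_rpow (by norm_num) (by norm_num) (by linarith)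
      _ = 1 := Real.one_rpow x
  have hhalf0 : (0 : ℝ) ≤ (1 / 2 : ℝ) ^ x := Real.rpow_nonneg (by norm_num) x
  -- t^x ≥ k^x
  have htk : k ^ x ≤ t ^ x := Real.rpow_le_rpow (le_of_lt hk0) ht (by linarith)
  -- product rules
  have hmul1 : (k * (1 + t)) ^ x = k ^ x * (1 + t) ^ x :=
    Real.mul_rpow (le_of_lt hk0) (by linarith)
  have hmul2 : (t * (1 + k)) ^ x = t ^ x * (1 + k) ^ x :=
    Real.mul_rpow (le_of_lt ht0) (by linarith)
  -- main inequality multiplied through by k^x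
  have hmain : k ^ x * (1 + t) ^ x ≤ (1 / 2 : ℝ) ^ x * k ^ x +
      ((1 + k) ^ x - (1 / 2 : ℝ) ^ x) * t ^ x := by
    have e1 : k + k * t = k * (1 + t) := by ring
    have e2 : t + k * t = t * (1 + k) := by ring
    rw [e1, e2, hmul1, hmul2] at hkey
    nlinarith [hkey, htk, hhalf, hhalf0]
  -- divide back
  rw [div_mul_eq_mul_div, ← sub_le_iff_le_add', le_div_iff₀ hkx]
  nlinarith [hmain]
end

section
/- Let f : [0,1] → ℝ≥0 be a monotonically increasing function satisfying the superadditivity property f(x² + y²)^r ≥ f(x²)^r + f(y²)^r for some fixed r ≥ √2 whenever x² + y² ≤ 1. If f(y²)^r ≥ k·f(x²)^r for some real k ≥ 1, then for all α with 0 ≤ α ≤ r/2, f(x² + y²)^α ≥ (1/2)^(α/r) f(x²)^α + ((1+k)^(α/r) - (1/2)^(α/r))/k^(α/r) · f(y²)^α. -/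
open Real Set

lemma keyineq (s k t : ℝ) (hs0 : 0 ≤ s) (hs : s ≤ 1/2) (hk : 1 ≤ k) (ht : 1 ≤ t) :
    (1/2 : ℝ) ^ s + ((1 + k) ^ s - (1/2 : ℝ) ^ s) * t ^ s ≤ (1 + k * t) ^ s := by
  rcases eq_or_lt_of_le hs0 with hs0' | hs0'
  · simp [← hs0']
  have hk0 : (0:ℝ) < k := lt_of_lt_of_le one_pos hk
  have h2k : (2:ℝ) ≤ 1 + k := by linarith
  have h1k : (0:ℝ) < 1 + k := by linarith
  obtain ⟨c, hc⟩ : ∃ c : ℝ, c = (1 + k) ^ s - (1/2 : ℝ) ^ s := ⟨_, rfl⟩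
  rw [← hc]
  -- Step A : c ≤ k * (1+k)^(s-1)
  have hsplit : (1 + k) ^ s = (1 + k) * (1 + k) ^ (s - 1) := by
    rw [← Real.rpow_one_add' (by positivity) (by linarith)]
    ring_nf
  have hB2 : (1 + k) ^ (s - 1) ≤ (2:ℝ) ^ (s - 1) :=
    Real.rpow_le_rpow_of_nonpos two_pos h2k (by linarith)
  have hB3 : (2:ℝ) ^ (s - 1) ≤ (2:ℝ) ^ (-s) :=
    Real.rpow_le_rpow_of_exponent_le one_le_two (by linarith)
  have hB4 : (2:ℝ) ^ (-s) = (1/2 : ℝ) ^ s := by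
    rw [Real.rpow_neg (by norm_num), ← Real.inv_rpow (by norm_num)]
    norm_num
  have hA : c ≤ k * (1 + k) ^ (s - 1) := by
    have : (1 + k) ^ (s - 1) ≤ (1/2 : ℝ) ^ s := by
      calc (1 + k) ^ (s - 1) ≤ (2:ℝ) ^ (s - 1) := hB2
        _ ≤ (2:ℝ) ^ (-s) := hB3
        _ = (1/2 : ℝ) ^ s := hB4
    have h' : (1+k) * (1+k)^(s-1) - k * (1+k)^(s-1) = (1+k)^(s-1) := by ring
    rw [hc, hsplit]
    nlinarith [this, h']
  -- monotonicity of g on [1, ∞)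
  set g : ℝ → ℝ := fun u => (1 + k * u) ^ s - c * u ^ s with hg
  have hder : ∀ u : ℝ, 1 ≤ u →
      HasDerivAt g (k * s * (1 + k * u) ^ (s - 1) - c * (s * u ^ (s - 1))) u := by
    intro u hu
    have h1 : HasDerivAt (fun v : ℝ => (1 + k * v)) k u := by
      simpa using ((hasDerivAt_id u).const_mul k).const_add 1
    have h2 : HasDerivAt (fun v : ℝ => (1 + k * v) ^ s) (k * s * (1 + k * u) ^ (s - 1)) u :=
      h1.rpow_const (Or.inl (by nlinarith))
    have h3 : HasDerivAt (fun v : ℝ => v ^ s) (s * u ^ (s - 1)) u :=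
      Real.hasDerivAt_rpow_const (Or.inl (by nlinarith : u ≠ 0))
    exact h2.sub (h3.const_mul c)
  have hmono : MonotoneOn g (Ici 1) := by
    apply monotoneOn_of_deriv_nonneg (convex_Ici 1)
    · exact (HasDerivAt.continuousOn (fun u hu => hder u hu))
    · intro u hu
      rw [interior_Ici] at hu
      exact (hder u (le_of_lt hu)).differentiableAt.differentiableWithinAt
    · intro u hu
      rw [interior_Ici] at hu
      rw [(hder u hu.le).deriv]
      have hu1 : (1:ℝ) ≤ u := hu.le
      have hu0 : (0:ℝ) < u := by linarith
      have hbase : (0:ℝ) < 1 + k * u := by nlinarith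
      -- need c * u^(s-1) ≤ k * (1+k*u)^(s-1)
      have key : c * u ^ (s - 1) ≤ k * (1 + k * u) ^ (s - 1) := by
        rcases le_or_gt c 0 with hc0 | hc0
        · have h7 : c * u ^ (s-1) ≤ 0 :=
            mul_nonpos_of_nonpos_of_nonneg hc0 (Real.rpow_nonneg hu0.le (s-1))
          have h8 : (0:ℝ) ≤ k * (1 + k*u)^(s-1) := by positivity
          linarith
        · have h5 : ((1+k) * u) ^ (s-1) ≤ (1 + k * u) ^ (s-1) := by
            apply Real.rpow_le_rpow_of_nonpos hbase (by nlinarith) (by linarith)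
          have h6 : ((1+k) * u) ^ (s-1) = (1+k)^(s-1) * u^(s-1) :=
            Real.mul_rpow h1k.le hu0.le
          calc c * u ^ (s-1) ≤ (k * (1+k)^(s-1)) * u^(s-1) := by
                apply mul_le_mul_of_nonneg_right hA (Real.rpow_nonneg hu0.le _)
            _ = k * ((1+k) * u) ^ (s-1) := by rw [h6]; ring
            _ ≤ k * (1 + k * u) ^ (s-1) := by
                exact mul_le_mul_of_nonneg_left h5 hk0.le
      nlinarith [key, hs0]
  have h1t : g 1 ≤ g t := hmono (mem_Ici.2 le_rfl) (mem_Ici.2 ht) ht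
  simp only [hg, mul_one, Real.one_rpow] at h1t
  linarith [h1t, hc]

theorem lemma3 (f : ℝ → ℝ) (r k α x y : ℝ)
    (hf0 : ∀ t, 0 ≤ t → t ≤ 1 → 0 ≤ f t)
    (hmono : ∀ s t, 0 ≤ s → s ≤ t → t ≤ 1 → f s ≤ f t)
    (hr : Real.sqrt 2 ≤ r)
    (hsuper : ∀ u v : ℝ, u ^ 2 + v ^ 2 ≤ 1 →
      f (u ^ 2 + v ^ 2) ^ r ≥ f (u ^ 2) ^ r + f (v ^ 2) ^ r)
    (hx0 : 0 ≤ x) (hx1 : x ≤ 1) (hy0 : 0 ≤ y) (hy1 : y ≤ 1)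
    (hxy : x ^ 2 + y ^ 2 ≤ 1)
    (hfx : 0 < f (x ^ 2))
    (hk : 1 ≤ k) (hcond : f (y ^ 2) ^ r ≥ k * f (x ^ 2) ^ r)
    (hα0 : 0 ≤ α) (hα : α ≤ r / 2) :
    f (x ^ 2 + y ^ 2) ^ α ≥
      (1 / 2 : ℝ) ^ (α / r) * f (x ^ 2) ^ α +
        ((1 + k) ^ (α / r) - (1 / 2 : ℝ) ^ (α / r)) / k ^ (α / r) * f (y ^ 2) ^ α := by
  have hr0 : (0:ℝ) < r := lt_of_lt_of_le (Real.sqrt_pos.2 two_pos) hr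
  set s := α / r with hs
  have hs0 : 0 ≤ s := div_nonneg hα0 hr0.le
  have hs12 : s ≤ 1/2 := by
    rw [hs, div_le_iff₀ hr0]; linarith
  have hk0 : (0:ℝ) < k := lt_of_lt_of_le one_pos hk
  have hy2 : y ^ 2 ≤ 1 := by nlinarith
  have hfy0 : 0 ≤ f (y ^ 2) := hf0 _ (by positivity) hy2
  have hAr : 0 < f (x ^ 2) ^ r := Real.rpow_pos_of_pos hfx r
  have hBr : 0 < f (y ^ 2) ^ r := lt_of_lt_of_le (by nlinarith) hcond
  have hC0 : 0 ≤ f (x ^ 2 + y ^ 2) := hf0 _ (by positivity) hxy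
  have hsup := hsuper x y hxy
  set t := f (y ^ 2) ^ r / (k * f (x ^ 2) ^ r) with htdef
  have ht1 : 1 ≤ t := (one_le_div (by positivity)).2 hcond
  have hkey := keyineq s k t hs0 hs12 hk ht1
  have hkt : 1 ≤ 1 + k * t := by nlinarith [mul_pos hk0 (lt_of_lt_of_le one_pos ht1)]
  have hsum : f (x ^ 2) ^ r * (1 + k * t) = f (x ^ 2) ^ r + f (y ^ 2) ^ r := by
    rw [htdef]; field_simp
  have hrs : r * s = α := by rw [hs]; field_simp
  have hCa : f (x ^ 2 + y ^ 2) ^ α = (f (x ^ 2 + y ^ 2) ^ r) ^ s := by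
    rw [← hrs, Real.rpow_mul hC0]
  have hAa : f (x ^ 2) ^ α = (f (x ^ 2) ^ r) ^ s := by
    rw [← hrs, Real.rpow_mul hfx.le]
  have hBa : f (y ^ 2) ^ α = (f (y ^ 2) ^ r) ^ s := by
    rw [← hrs, Real.rpow_mul hfy0]
  have hAs : 0 < (f (x ^ 2) ^ r) ^ s := Real.rpow_pos_of_pos hAr s
  have hks : 0 < k ^ s := Real.rpow_pos_of_pos hk0 s
  have h3 : (f (x ^ 2) ^ r) ^ s * t ^ s = (f (y ^ 2) ^ r) ^ s / k ^ s := by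
    rw [htdef, Real.div_rpow hBr.le (by positivity), Real.mul_rpow hk0.le hAr.le]
    field_simp
  have h1 : (f (x ^ 2) ^ r + f (y ^ 2) ^ r) ^ s ≤ (f (x ^ 2 + y ^ 2) ^ r) ^ s :=
    Real.rpow_le_rpow (by positivity) hsup hs0
  have h2 : (f (x ^ 2) ^ r + f (y ^ 2) ^ r) ^ s = (f (x ^ 2) ^ r) ^ s * (1 + k * t) ^ s := by
    rw [← hsum, Real.mul_rpow hAr.le (by linarith)]
  have h4 : (f (x ^ 2) ^ r) ^ s * ((1/2 : ℝ) ^ s + ((1 + k) ^ s - (1/2 : ℝ) ^ s) * t ^ s)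
      ≤ (f (x ^ 2) ^ r) ^ s * (1 + k * t) ^ s :=
    mul_le_mul_of_nonneg_left hkey hAs.le
  have h5 : (f (x ^ 2) ^ r) ^ s * ((1/2 : ℝ) ^ s + ((1 + k) ^ s - (1/2 : ℝ) ^ s) * t ^ s)
      = (1/2 : ℝ) ^ s * (f (x ^ 2) ^ r) ^ s
        + ((1 + k) ^ s - (1/2 : ℝ) ^ s) / k ^ s * (f (y ^ 2) ^ r) ^ s := by
    have : (f (x ^ 2) ^ r) ^ s * (((1 + k) ^ s - (1/2 : ℝ) ^ s) * t ^ s)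
        = ((1 + k) ^ s - (1/2 : ℝ) ^ s) * ((f (x ^ 2) ^ r) ^ s * t ^ s) := by ring
    rw [mul_add, this, h3]
    ring
  rw [ge_iff_le, hCa, hAa, hBa]
  calc (1/2 : ℝ) ^ s * (f (x ^ 2) ^ r) ^ s
        + ((1 + k) ^ s - (1/2 : ℝ) ^ s) / k ^ s * (f (y ^ 2) ^ r) ^ s
      = (f (x ^ 2) ^ r) ^ s * ((1/2 : ℝ) ^ s + ((1 + k) ^ s - (1/2 : ℝ) ^ s) * t ^ s) := h5.symm
    _ ≤ (f (x ^ 2) ^ r) ^ s * (1 + k * t) ^ s := h4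
    _ = (f (x ^ 2) ^ r + f (y ^ 2) ^ r) ^ s := h2.symm
    _ ≤ (f (x ^ 2 + y ^ 2) ^ r) ^ s := h1
end

section
/- For real numbers k ≥ 1 and 0 ≤ u ≤ 1/2, we have ((1+k)^u - 1)/k^u ≤ (1+k)^u - (1/2)^u)/k^u, and moreover (1/2)^u·a + ((1+k)^u - (1/2)^u)/k^u·b ≥ a + ((1+k)^u - 1)/k^u·b whenever b ≥ k·a ≥ 0; that is, the bound (1/2)^u a + ((1+k)^u-(1/2)^u)/k^u · b is at least a + ((1+k)^u-1)/k^u · b. -/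
theorem tighter_bound (k u a b : ℝ) (hk : 1 ≤ k) (hu0 : 0 ≤ u) (hu : u ≤ 1 / 2)
    (ha : 0 ≤ a) (hb : k * a ≤ b) :
    ((1 + k) ^ u - 1) / k ^ u ≤ ((1 + k) ^ u - (1 / 2 : ℝ) ^ u) / k ^ u ∧
    (1 / 2 : ℝ) ^ u * a + ((1 + k) ^ u - (1 / 2 : ℝ) ^ u) / k ^ u * b ≥
      a + ((1 + k) ^ u - 1) / k ^ u * b := by
  have hk0 : (0:ℝ) < k := lt_of_lt_of_le one_pos hk
  have hku : (0:ℝ) < k ^ u := Real.rpow_pos_of_pos hk0 u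
  have hhalf : ((1/2:ℝ)) ^ u ≤ 1 :=
    Real.rpow_le_one (by norm_num) (by norm_num) hu0
  have hkuk : k ^ u ≤ k := by
    calc k ^ u ≤ k ^ (1:ℝ) := Real.rpow_le_rpow_of_exponent_le hk (by linarith)
      _ = k := Real.rpow_one k
  constructor
  · exact div_le_div_of_nonneg_right (by linarith) hku.le
  · have key : a ≤ b / k ^ u := by
      rw [le_div_iff₀ hku]
      nlinarith
    have h1 : (1 - (1/2:ℝ)^u) * a ≤ (1 - (1/2:ℝ)^u) / k ^ u * b := by
      have hnn : 0 ≤ 1 - (1/2:ℝ)^u := by linarith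
      calc (1 - (1/2:ℝ)^u) * a ≤ (1 - (1/2:ℝ)^u) * (b / k ^ u) :=
            mul_le_mul_of_nonneg_left key hnn
        _ = (1 - (1/2:ℝ)^u) / k ^ u * b := by ring
    have hdiff : ((1 + k) ^ u - (1/2:ℝ)^u) / k ^ u * b - ((1 + k) ^ u - 1) / k ^ u * b
        = (1 - (1/2:ℝ)^u) / k ^ u * b := by
      field_simp
      ring
    linarith
end

section
/- For real numbers k ≥ 1 and 0 ≤ u ≤ 1, ((1+k)^u - 1)/k^u ≥ 2^u - 1. -/
open Real Set

lemma remark3_aux (u : ℝ) (hu0 : 0 ≤ u) (hu : u ≤ 1) {s : ℝ} (hs0 : 0 < s)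
    (hs1 : s ≤ 1) : (2 : ℝ) ^ u - 1 ≤ (1 + s) ^ u - s ^ u := by
  have hanti : AntitoneOn (fun x : ℝ => (1 + x) ^ u - x ^ u) (Icc s 1) := by
    apply antitoneOn_of_deriv_nonpos (convex_Icc s 1)
    · apply ContinuousOn.sub
      · exact ContinuousOn.rpow_const (by fun_prop) (fun x hx => Or.inl (by nlinarith [hx.1]))
      · exact ContinuousOn.rpow_const (by fun_prop) (fun x hx => Or.inl (by nlinarith [hx.1]))
    · intro x hx
      rw [interior_Icc] at hx
      have hx0 : 0 < x := lt_trans hs0 hx.1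
      exact (((hasDerivAt_id x).const_add 1).rpow_const (Or.inl (by positivity)) |>.sub
        ((hasDerivAt_id x).rpow_const (Or.inl hx0.ne'))).differentiableAt.differentiableWithinAt
    · intro x hx
      rw [interior_Icc] at hx
      have hx0 : 0 < x := lt_trans hs0 hx.1
      have h1 : HasDerivAt (fun x : ℝ => (1 + x) ^ u - x ^ u)
          (1 * u * (1 + x) ^ (u - 1) - 1 * u * x ^ (u - 1)) x := by
        exact ((hasDerivAt_id x).const_add 1).rpow_const (Or.inl (by positivity)) |>.sub
          ((hasDerivAt_id x).rpow_const (Or.inl hx0.ne'))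
      rw [h1.deriv]
      have h2 : (1 + x) ^ (u - 1) ≤ x ^ (u - 1) :=
        Real.rpow_le_rpow_of_nonpos hx0 (by linarith) (by linarith)
      nlinarith [Real.rpow_nonneg (le_of_lt hx0) (u - 1)]
  have := hanti (show s ∈ Icc s 1 from ⟨le_refl s, hs1⟩)
    (show (1:ℝ) ∈ Icc s 1 from ⟨hs1, le_refl 1⟩) hs1
  simpa [show (1:ℝ)+1 = 2 by norm_num] using this

theorem remark3_coeff (k u : ℝ) (hk : 1 ≤ k) (hu0 : 0 ≤ u) (hu : u ≤ 1) :
    ((1 + k) ^ u - 1) / k ^ u ≥ (2 : ℝ) ^ u - 1 := by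
  have hk0 : (0:ℝ) < k := lt_of_lt_of_le one_pos hk
  have hku : (0:ℝ) < k ^ u := Real.rpow_pos_of_pos hk0 u
  rw [ge_iff_le, le_div_iff₀ hku]
  have hinv0 : 0 < k⁻¹ := inv_pos.mpr hk0
  have hinv1 : k⁻¹ ≤ 1 := by
    rw [inv_le_one_iff₀]; right; exact hk
  have key := remark3_aux u hu0 hu hinv0 hinv1
  have hm := mul_le_mul_of_nonneg_right key hku.le
  calc ((2:ℝ) ^ u - 1) * k ^ u ≤ ((1 + k⁻¹) ^ u - (k⁻¹) ^ u) * k ^ u := hm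
    _ = (1 + k) ^ u - 1 := by
        rw [sub_mul, ← Real.mul_rpow (by positivity) hk0.le,
          ← Real.mul_rpow (by positivity) hk0.le]
        rw [add_mul, one_mul, inv_mul_cancel₀ hk0.ne', Real.one_rpow]
        ring_nf
end

section
/- Suppose a, b, c are nonnegative reals with c^r ≥ a^r + b^r for some r ≥ 1, and b^r ≥ k·a^r for some real k ≥ 1. Then for all α with 0 ≤ α ≤ r/2, c^α ≥ (1/2)^(α/r)·a^α + ((1+k)^(α/r) - (1/2)^(α/r))/k^(α/r)·b^α. -/
open Real Set

/-- Key constant bound: `((1+k)^t - (1/2)^t)/k^t ≤ ((1+k)/k)^(t-1)` for `k ≥ 1`, `0 ≤ t ≤ 1/2`. -/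
lemma mono_key (k t : ℝ) (hk : 1 ≤ k) (ht0 : 0 ≤ t) (ht : t ≤ 1/2) :
    ((1+k)^t - (1/2 : ℝ)^t)/k^t ≤ ((1+k)/k)^(t-1) := by
  have hk0 : (0:ℝ) < k := lt_of_lt_of_le one_pos hk
  have hk1 : (0:ℝ) < 1 + k := by linarith
  have hkt : (0:ℝ) < k ^ t := Real.rpow_pos_of_pos hk0 t
  rw [div_le_iff₀ hkt]
  have h1 : (1+k)^(t-1) ≤ (2:ℝ)^(t-1) :=
    Real.rpow_le_rpow_of_nonpos two_pos (by linarith) (by linarith)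
  have h2 : (2:ℝ)^(t-1) ≤ (2:ℝ)^(-t) :=
    Real.rpow_le_rpow_of_exponent_le one_le_two (by linarith)
  have h3 : ((1/2:ℝ))^t = (2:ℝ)^(-t) := by
    rw [Real.rpow_neg (by norm_num), one_div, Real.inv_rpow (by norm_num)]
  have h4 : ((1+k)/k)^(t-1) * k^t = (1+k)^(t-1) * k := by
    rw [Real.div_rpow hk1.le hk0.le]
    rw [div_mul_eq_mul_div, mul_div_assoc, ← Real.rpow_sub hk0]
    have : t - (t-1) = 1 := by ring
    rw [this, Real.rpow_one]
  rw [h4]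
  have h5 : (1+k)^t = (1+k)^(t-1) * (1+k) := by
    rw [← Real.rpow_add_one hk1.ne' (t-1)]; ring_nf
  have h6 : (1+k)^(t-1) ≤ (1/2:ℝ)^t := by rw [h3]; exact h1.trans h2
  nlinarith [Real.rpow_pos_of_pos hk1 (t-1)]

/-- Monotonicity of `y ↦ (x+y)^t - C y^t` on `[k x, ∞)`. -/
lemma mono_g (x k t : ℝ) (hx : 0 < x) (hk : 1 ≤ k) (ht0 : 0 ≤ t) (ht : t ≤ 1/2) :
    MonotoneOn (fun y => (x+y)^t - ((1+k)^t - (1/2:ℝ)^t)/k^t * y^t) (Set.Ici (k*x)) := by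
  have hk0 : (0:ℝ) < k := lt_of_lt_of_le one_pos hk
  have hkx : (0:ℝ) < k * x := mul_pos hk0 hx
  set C : ℝ := ((1+k)^t - (1/2:ℝ)^t)/k^t with hC
  have hderiv : ∀ y, k*x < y →
      HasDerivAt (fun y => (x+y)^t - C * y^t)
        (t*(x+y)^(t-1)*1 - C * (t*y^(t-1))) y := by
    intro y hy
    have hy0 : 0 < y := hkx.trans hy
    have hxy0 : 0 < x + y := by linarith
    have h1 : HasDerivAt (fun y => (x+y)^t) (t*(x+y)^(t-1)*1) y :=
      (Real.hasDerivAt_rpow_const (Or.inl hxy0.ne')).comp y ((hasDerivAt_id y).const_add x)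
    have h2 : HasDerivAt (fun y => C * y^t) (C * (t*y^(t-1))) y :=
      (Real.hasDerivAt_rpow_const (Or.inl hy0.ne')).const_mul C
    exact h1.sub h2
  apply monotoneOn_of_deriv_nonneg (convex_Ici _)
  · apply ContinuousOn.sub
    · exact (continuous_const.add continuous_id).continuousOn.rpow_const
        (fun y _ => Or.inr ht0)
    · exact continuousOn_const.mul (continuousOn_id.rpow_const (fun y _ => Or.inr ht0))
  · rw [interior_Ici]
    intro y hy
    exact ((hderiv y hy).differentiableAt).differentiableWithinAt
  · rw [interior_Ici]
    intro y hy
    rw [(hderiv y hy).deriv]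
    have hy0 : 0 < y := hkx.trans hy
    have hxy0 : 0 < x + y := by linarith
    have hykx : k * x < y := Set.mem_Ioi.mp hy
    have hb : x + y ≤ (1+k)/k * y := by
      rw [div_mul_eq_mul_div, le_div_iff₀ hk0]
      nlinarith [hykx.le]
    have h1 : ((1+k)/k * y)^(t-1) ≤ (x+y)^(t-1) :=
      Real.rpow_le_rpow_of_nonpos hxy0 hb (by linarith)
    have h2 : ((1+k)/k * y)^(t-1) = ((1+k)/k)^(t-1) * y^(t-1) :=
      Real.mul_rpow (by positivity) hy0.le
    have h3 : C * y^(t-1) ≤ (x+y)^(t-1) := by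
      have := mono_key k t hk ht0 ht
      have hyt : (0:ℝ) < y^(t-1) := Real.rpow_pos_of_pos hy0 _
      calc C * y^(t-1) ≤ ((1+k)/k)^(t-1) * y^(t-1) := by
            exact mul_le_mul_of_nonneg_right this hyt.le
        _ = ((1+k)/k * y)^(t-1) := h2.symm
        _ ≤ (x+y)^(t-1) := h1
    have : C * (t * y^(t-1)) ≤ t * (x+y)^(t-1) := by
      calc C * (t * y^(t-1)) = t * (C * y^(t-1)) := by ring
        _ ≤ t * ((x+y)^(t-1)) := mul_le_mul_of_nonneg_left h3 ht0
    linarith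

/-- Core inequality: `(x+y)^t ≥ (1/2)^t x^t + C y^t` for `y ≥ k x`. -/
lemma core_ineq (x y k t : ℝ) (hx : 0 < x) (hk : 1 ≤ k) (hy : k*x ≤ y)
    (ht0 : 0 ≤ t) (ht : t ≤ 1/2) :
    (1/2:ℝ)^t * x^t + ((1+k)^t - (1/2:ℝ)^t)/k^t * y^t ≤ (x+y)^t := by
  have hk0 : (0:ℝ) < k := lt_of_lt_of_le one_pos hk
  have hkt : (0:ℝ) < k^t := Real.rpow_pos_of_pos hk0 t
  have hmono := mono_g x k t hx hk ht0 ht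
  have h : (x + k*x)^t - ((1+k)^t - (1/2:ℝ)^t)/k^t * (k*x)^t ≤
      (x+y)^t - ((1+k)^t - (1/2:ℝ)^t)/k^t * y^t :=
    hmono (Set.self_mem_Ici) hy hy
  have hgkx : (x + k*x)^t - ((1+k)^t - (1/2:ℝ)^t)/k^t * (k*x)^t = (1/2:ℝ)^t * x^t := by
    have e1 : x + k*x = (1+k)*x := by ring
    have e2 : ((1+k)*x)^t = (1+k)^t * x^t := Real.mul_rpow (by linarith) hx.le
    have e3 : (k*x)^t = k^t * x^t := Real.mul_rpow hk0.le hx.le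
    rw [e1, e2, e3]
    field_simp
    ring
  rw [hgkx] at h
  linarith

theorem monogamy_core (a b c r k α : ℝ) (ha : 0 < a) (hb : 0 ≤ b) (hc : 0 ≤ c)
    (hr : 1 ≤ r) (hcr : c ^ r ≥ a ^ r + b ^ r)
    (hk : 1 ≤ k) (hba : b ^ r ≥ k * a ^ r)
    (hα0 : 0 ≤ α) (hα : α ≤ r / 2) :
    c ^ α ≥ (1 / 2 : ℝ) ^ (α / r) * a ^ α +
      ((1 + k) ^ (α / r) - (1 / 2 : ℝ) ^ (α / r)) / k ^ (α / r) * b ^ α := by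
  have hr0 : (0:ℝ) < r := lt_of_lt_of_le one_pos hr
  set t := α / r with htdef
  have ht0 : 0 ≤ t := div_nonneg hα0 hr0.le
  have ht : t ≤ 1/2 := by
    rw [htdef, div_le_iff₀ hr0]
    linarith
  have hx : 0 < a ^ r := Real.rpow_pos_of_pos ha r
  have hrt : r * t = α := by rw [htdef]; field_simp
  have hat : a ^ α = (a^r)^t := by rw [← Real.rpow_mul ha.le, hrt]
  have hbt : b ^ α = (b^r)^t := by rw [← Real.rpow_mul hb, hrt]
  have hct : c ^ α = (c^r)^t := by rw [← Real.rpow_mul hc, hrt]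
  rw [hat, hbt, hct]
  have h1 : (a^r + b^r)^t ≤ (c^r)^t :=
    Real.rpow_le_rpow (by positivity) hcr ht0
  have h2 := core_ineq (a^r) (b^r) k t hx hk hba ht0 ht
  exact le_trans h2 h1
end

section
/- Suppose a, b, c are nonnegative reals with c^s ≤ a^s + b^s for some 0 < s, and b^s ≥ k·a^s for some real k ≥ 1, with a > 0. Then for all β ≥ max{1, s}, c^β ≤ (1/2)^(β/s)·a^β + ((1+k)^(β/s) - (1/2)^(β/s))/k^(β/s)·b^β. -/
open Set

lemma g_mono (t : ℝ) (ht : 1 ≤ t) :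
    MonotoneOn (fun u : ℝ => (1 + u) ^ t - (1 / 2 : ℝ) ^ t * u ^ t) (Set.Icc 0 1) := by
  have ht0 : (0:ℝ) ≤ t := le_trans zero_le_one ht
  apply monotoneOn_of_deriv_nonneg (convex_Icc 0 1)
  · apply ContinuousOn.sub
    · exact ((continuous_const.add continuous_id).rpow_const
        (fun x => Or.inr ht0)).continuousOn
    · exact (continuous_const.mul
        (continuous_id.rpow_const (fun x => Or.inr ht0))).continuousOn
  · rw [interior_Icc]
    intro u hu
    obtain ⟨hu0, hu1⟩ := hu
    have h1 : HasDerivAt (fun u : ℝ => (1 + u) ^ t - (1 / 2 : ℝ) ^ t * u ^ t)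
        (1 * t * (1 + u) ^ (t - 1) - (1 / 2 : ℝ) ^ t * (1 * t * u ^ (t - 1))) u := by
      have hA : HasDerivAt (fun u : ℝ => (1 + u) ^ t) (1 * t * (1 + u) ^ (t - 1)) u :=
        ((hasDerivAt_id u).const_add 1).rpow_const (Or.inl (by simp only [id_eq]; intro h; linarith))
      have hB : HasDerivAt (fun u : ℝ => u ^ t) (1 * t * u ^ (t - 1)) u :=
        (hasDerivAt_id u).rpow_const (Or.inl (by simp only [id_eq]; intro h; linarith))
      exact hA.sub (hB.const_mul _)
    exact h1.differentiableAt.differentiableWithinAt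
  · rw [interior_Icc]
    intro u hu
    obtain ⟨hu0, hu1⟩ := hu
    have hA : HasDerivAt (fun u : ℝ => (1 + u) ^ t) (1 * t * (1 + u) ^ (t - 1)) u :=
      ((hasDerivAt_id u).const_add 1).rpow_const (Or.inl (by simp only [id_eq]; intro h; linarith))
    have hB : HasDerivAt (fun u : ℝ => u ^ t) (1 * t * u ^ (t - 1)) u :=
      (hasDerivAt_id u).rpow_const (Or.inl (by simp only [id_eq]; intro h; linarith))
    have h1 := (hA.sub (hB.const_mul ((1 / 2 : ℝ) ^ t))).deriv
    rw [show deriv (fun u : ℝ => (1 + u) ^ t - (1 / 2 : ℝ) ^ t * u ^ t) u = _ from h1]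
    have hle : u ^ (t - 1) ≤ (1 + u) ^ (t - 1) :=
      Real.rpow_le_rpow hu0.le (by linarith) (by linarith)
    have hhalf : (1 / 2 : ℝ) ^ t ≤ 1 :=
      Real.rpow_le_one (by norm_num) (by norm_num) ht0
    have hpos : 0 ≤ u ^ (t - 1) := Real.rpow_nonneg hu0.le _
    have h2 : (1/2:ℝ)^t * u^(t-1) ≤ (1+u)^(t-1) :=
      le_trans (mul_le_of_le_one_left hpos hhalf) hle
    nlinarith [mul_nonneg (le_trans zero_le_one ht) (sub_nonneg.mpr h2)]

theorem polygamy_core (a b c s k β : ℝ) (ha : 0 < a) (hb : 0 ≤ b) (hc : 0 ≤ c)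
    (hs : 0 < s) (hcs : c ^ s ≤ a ^ s + b ^ s)
    (hk : 1 ≤ k) (hba : b ^ s ≥ k * a ^ s)
    (hβ : max 1 s ≤ β) :
    c ^ β ≤ (1 / 2 : ℝ) ^ (β / s) * a ^ β +
      ((1 + k) ^ (β / s) - (1 / 2 : ℝ) ^ (β / s)) / k ^ (β / s) * b ^ β := by
  set t := β / s with htdef
  have hk0 : (0:ℝ) < k := lt_of_lt_of_le one_pos hk
  have ht1 : 1 ≤ t := (one_le_div hs).mpr (le_trans (le_max_right 1 s) hβ)
  have ht0 : (0:ℝ) ≤ t := le_trans zero_le_one ht1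
  have hβst : β = s * t := by rw [htdef]; field_simp
  set x := a ^ s with hxdef
  set y := b ^ s with hydef
  have hx : 0 < x := Real.rpow_pos_of_pos ha s
  have hy : 0 < y := lt_of_lt_of_le (by nlinarith) hba
  -- rewrite powers
  have hcβ : c ^ β = (c ^ s) ^ t := by rw [hβst, Real.rpow_mul hc]
  have haβ : a ^ β = x ^ t := by rw [hβst, Real.rpow_mul ha.le]
  have hbβ : b ^ β = y ^ t := by rw [hβst, Real.rpow_mul hb]
  rw [hcβ, haβ, hbβ]
  have hcs0 : 0 ≤ c ^ s := Real.rpow_nonneg hc s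
  have step1 : (c ^ s) ^ t ≤ (x + y) ^ t := Real.rpow_le_rpow hcs0 hcs ht0
  refine le_trans step1 ?_
  -- core inequality with u = x / y
  set u := x / y with hudef
  have hu0 : 0 ≤ u := le_of_lt (div_pos hx hy)
  have huk : u ≤ 1 / k := by
    rw [hudef, div_le_div_iff₀ hy hk0]
    linarith [hba]
  have hk1 : (1:ℝ)/k ≤ 1 := by
    rw [div_le_one hk0]; exact hk
  have hmono := g_mono t ht1 ⟨hu0, le_trans huk hk1⟩
    ⟨by positivity, hk1⟩ huk
  simp only at hmono
  -- translate hmono : (1+u)^t - (1/2)^t u^t ≤ (1+1/k)^t - (1/2)^t (1/k)^t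
  have hxy : x + y = y * (1 + u) := by
    rw [hudef]; field_simp; ring
  have hxu : x = y * u := by rw [hudef]; field_simp
  have e1 : (x + y) ^ t = y ^ t * (1 + u) ^ t := by
    rw [hxy, Real.mul_rpow hy.le (by linarith)]
  have e2 : x ^ t = y ^ t * u ^ t := by
    rw [hxu, Real.mul_rpow hy.le hu0]
  have e3 : (1 + 1/k) ^ t = (1 + k) ^ t / k ^ t := by
    rw [show (1:ℝ) + 1/k = (1 + k)/k by field_simp; ring,
      Real.div_rpow (by linarith) hk0.le]
  have e4 : ((1:ℝ)/k) ^ t = 1 / k ^ t := by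
    rw [Real.div_rpow zero_le_one hk0.le, Real.one_rpow]
  rw [e3, e4] at hmono
  have hyt : 0 < y ^ t := Real.rpow_pos_of_pos hy t
  have hkt : 0 < k ^ t := Real.rpow_pos_of_pos hk0 t
  rw [e1, e2]
  have hcoef : (1 + u) ^ t ≤ (1/2:ℝ)^t * u^t + ((1+k)^t - (1/2:ℝ)^t) / k^t := by
    have : ((1+k)^t - (1/2:ℝ)^t)/k^t = (1+k)^t/k^t - (1/2:ℝ)^t * (1/k^t) := by
      field_simp
    rw [this]; linarith
  calc y ^ t * (1 + u) ^ t
      ≤ y ^ t * ((1/2:ℝ)^t * u^t + ((1+k)^t - (1/2:ℝ)^t) / k^t) := by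
        exact mul_le_mul_of_nonneg_left hcoef hyt.le
    _ = (1/2:ℝ)^t * (y^t * u^t) + ((1+k)^t - (1/2:ℝ)^t)/k^t * y^t := by ring
end

section
/- For real numbers t ≥ 1 and 0 ≤ x ≤ 1/2, (1+t)^x ≥ (1/2)^x + (2^x - (1/2)^x)·t^x. -/
theorem lemma1_k_one_lower (t x : ℝ) (ht : 1 ≤ t) (hx0 : 0 ≤ x) (hx : x ≤ 1 / 2) :
    (1 + t) ^ x ≥ (1 / 2 : ℝ) ^ x + ((2 : ℝ) ^ x - (1 / 2 : ℝ) ^ x) * t ^ x := by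
  rcases eq_or_lt_of_le hx0 with h0 | hxpos
  · simp [← h0]
  have ht0 : (0:ℝ) < t := lt_of_lt_of_le one_pos ht
  set g : ℝ → ℝ := fun u => (1 + u) ^ x - (u / 2) ^ x with hg
  have hanti : AntitoneOn g (Set.Icc (0:ℝ) 1) := by
    apply antitoneOn_of_deriv_nonpos (convex_Icc 0 1)
    · apply ContinuousOn.sub
      · exact (Real.continuous_rpow_const hxpos.le).comp (continuous_const.add continuous_id) |>.continuousOn
      · exact (Real.continuous_rpow_const hxpos.le).comp (continuous_id.div_const 2) |>.continuousOn
    · intro u hu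
      rw [interior_Icc] at hu
      obtain ⟨hu0, hu1⟩ := hu
      have h1 : HasDerivAt (fun u : ℝ => (1 + u) ^ x)
          (1 * x * (1 + u) ^ (x - 1)) u :=
        (HasDerivAt.const_add 1 (hasDerivAt_id u)).rpow_const
          (Or.inl (by show (1:ℝ) + u ≠ 0; positivity))
      have h2 : HasDerivAt (fun u : ℝ => (u / 2) ^ x)
          ((1 / 2) * x * (u / 2) ^ (x - 1)) u := by
        have := ((hasDerivAt_id u).div_const 2).rpow_const
          (p := x) (Or.inl (by show u / 2 ≠ 0; positivity))
        simpa using this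
      exact (h1.sub h2).differentiableAt.differentiableWithinAt
    · intro u hu
      rw [interior_Icc] at hu
      obtain ⟨hu0, hu1⟩ := hu
      have h1 : HasDerivAt (fun u : ℝ => (1 + u) ^ x)
          (1 * x * (1 + u) ^ (x - 1)) u :=
        (HasDerivAt.const_add 1 (hasDerivAt_id u)).rpow_const
          (Or.inl (by show (1:ℝ) + u ≠ 0; positivity))
      have h2 : HasDerivAt (fun u : ℝ => (u / 2) ^ x)
          ((1 / 2) * x * (u / 2) ^ (x - 1)) u := by
        have := ((hasDerivAt_id u).div_const 2).rpow_const
          (p := x) (Or.inl (by show u / 2 ≠ 0; positivity))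
        simpa using this
      rw [show deriv g u = 1 * x * (1 + u) ^ (x - 1) - 1 / 2 * x * (u / 2) ^ (x - 1) from (h1.sub h2).deriv]
      -- key: (1+u)^(x-1) ≤ (1/2) * (u/2)^(x-1)
      have key : (1 + u) ^ (x - 1) ≤ (1 / 2) * (u / 2) ^ (x - 1) := by
        have hstep : (1 + u) ^ (x - 1) ≤ (4 * (u / 2)) ^ (x - 1) := by
          apply Real.rpow_le_rpow_of_nonpos (by positivity) (by linarith) (by linarith)
        have hmul : (4 * (u / 2) : ℝ) ^ (x - 1) = (4:ℝ) ^ (x - 1) * (u / 2) ^ (x - 1) :=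
          Real.mul_rpow (by norm_num) (by positivity)
        have h4 : (4:ℝ) ^ (x - 1) ≤ 1 / 2 := by
          have e1 : (4:ℝ) ^ (x - 1) = (2:ℝ) ^ (2 * (x - 1)) := by
            rw [Real.rpow_mul (by norm_num : (0:ℝ) ≤ 2)]
            norm_num
          have e2 : (2:ℝ) ^ (2 * (x - 1)) ≤ (2:ℝ) ^ (-1 : ℝ) :=
            Real.rpow_le_rpow_of_exponent_le (by norm_num) (by linarith)
          rw [e1]
          calc (2:ℝ) ^ (2 * (x - 1)) ≤ (2:ℝ) ^ (-1 : ℝ) := e2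
            _ = 1 / 2 := by
              rw [Real.rpow_neg_one]; norm_num
        calc (1 + u) ^ (x - 1) ≤ (4 * (u / 2)) ^ (x - 1) := hstep
          _ = (4:ℝ) ^ (x - 1) * (u / 2) ^ (x - 1) := hmul
          _ ≤ (1 / 2) * (u / 2) ^ (x - 1) := by
            apply mul_le_mul_of_nonneg_right h4 (by positivity)
      nlinarith [Real.rpow_nonneg (by positivity : (0:ℝ) ≤ u / 2) (x - 1)]
  -- apply antitonicity at 1/t ≤ 1
  have hmem1 : (1:ℝ) ∈ Set.Icc (0:ℝ) 1 := by norm_num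
  have hmemt : (1 / t : ℝ) ∈ Set.Icc (0:ℝ) 1 := by
    constructor
    · positivity
    · rw [div_le_one ht0]; linarith
  have hle : g 1 ≤ g (1 / t) := hanti hmemt hmem1 (by rw [div_le_one ht0]; linarith)
  simp only [hg] at hle
  norm_num at hle
  -- hle : 2^x - (1/2)^x ≤ (1 + 1/t)^x - (1/(2t))^x  (roughly)
  have htx : (0:ℝ) < t ^ x := Real.rpow_pos_of_pos ht0 x
  have e1 : (1 + t⁻¹) ^ x * t ^ x = (1 + t) ^ x := by
    rw [← Real.mul_rpow (by positivity) ht0.le]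
    congr 1
    field_simp
    ring
  have e2 : (t⁻¹ / 2 : ℝ) ^ x * t ^ x = (1 / 2 : ℝ) ^ x := by
    rw [← Real.mul_rpow (by positivity) ht0.le]
    congr 1
    field_simp
  have hle' : (2:ℝ) ^ x - (1 / 2 : ℝ) ^ x ≤ (1 + t⁻¹) ^ x - (t⁻¹ / 2) ^ x := by
    linarith
  have hmul := mul_le_mul_of_nonneg_right hle' htx.le
  rw [sub_mul, sub_mul, e1, e2] at hmul
  linarith
end

section
/- For real numbers t ≥ 1 and x ≥ 1, (1+t)^x ≤ (1/2)^x + (2^x - (1/2)^x)·t^x. -/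
theorem lemma1_k_one_upper (t x : ℝ) (ht : 1 ≤ t) (hx : 1 ≤ x) :
    (1 + t) ^ x ≤ (1 / 2 : ℝ) ^ x + ((2 : ℝ) ^ x - (1 / 2 : ℝ) ^ x) * t ^ x := by
  set c : ℝ := (2 : ℝ) ^ x - (1 / 2 : ℝ) ^ x with hc
  have hderiv : ∀ s : ℝ, HasDerivAt (fun s : ℝ => c * s ^ x - (1 + s) ^ x)
      (c * (x * s ^ (x - 1)) - x * (1 + s) ^ (x - 1)) s := by
    intro s
    have h1 : HasDerivAt (fun s : ℝ => s ^ x) (x * s ^ (x - 1)) s :=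
      Real.hasDerivAt_rpow_const (Or.inr hx)
    have h2 : HasDerivAt (fun s : ℝ => (1 + s) ^ x) (x * (1 + s) ^ (x - 1) * 1) (s) := by
      have h3 : HasDerivAt (fun s : ℝ => 1 + s) 1 s := by
        simpa using (hasDerivAt_id s).const_add 1
      exact (Real.hasDerivAt_rpow_const (Or.inr hx)).comp s h3
    have h4 := (h1.const_mul c).sub h2
    simp only [mul_one] at h4
    exact h4
  have hmono : MonotoneOn (fun s : ℝ => c * s ^ x - (1 + s) ^ x) (Set.Ici 1) := by
    apply monotoneOn_of_deriv_nonneg (convex_Ici 1)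
    · exact fun s _ => ((hderiv s).continuousAt).continuousWithinAt
    · exact fun s _ => ((hderiv s).differentiableAt).differentiableWithinAt
    · intro s hs
      rw [interior_Ici] at hs
      have hs1 : (1 : ℝ) < s := hs
      rw [(hderiv s).deriv]
      have hx1 : (0 : ℝ) ≤ x - 1 := by linarith
      have hs0 : (0 : ℝ) < s := by linarith
      have key : (1 + s) ^ (x - 1) ≤ c * s ^ (x - 1) := by
        have h2s : (1 + s) ^ (x - 1) ≤ (2 * s) ^ (x - 1) :=
          Real.rpow_le_rpow (by linarith) (by linarith) hx1
        have hmul : (2 * s) ^ (x - 1) = 2 ^ (x - 1) * s ^ (x - 1) :=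
          Real.mul_rpow (by norm_num) hs0.le
        have hcge : (2 : ℝ) ^ (x - 1) ≤ c := by
          rw [hc]
          have h12 : ((1 : ℝ) / 2) ^ x = 2 ^ (-x) := by
            rw [one_div, ← Real.rpow_neg_one, ← Real.rpow_mul (by norm_num), neg_one_mul]
          rw [h12]
          have : (2 : ℝ) ^ (-x) ≤ 2 ^ (x - 1) :=
            Real.rpow_le_rpow_left_iff (by norm_num) |>.mpr (by linarith)
          have h2 : (2 : ℝ) ^ (x - 1) + 2 ^ (x - 1) ≤ 2 ^ x := by
            have : (2 : ℝ) ^ (x - 1) * 2 = 2 ^ x := by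
              rw [← Real.rpow_add_one (by norm_num : (2:ℝ) ≠ 0)]
              ring_nf
            linarith [this]
          linarith
        calc (1 + s) ^ (x - 1) ≤ 2 ^ (x - 1) * s ^ (x - 1) := by rw [← hmul]; exact h2s
          _ ≤ c * s ^ (x - 1) := by
              apply mul_le_mul_of_nonneg_right hcge (Real.rpow_nonneg hs0.le _)
      have hx0 : 0 < x := by linarith
      nlinarith [Real.rpow_nonneg hs0.le (x - 1)]
  have h1t : (fun s : ℝ => c * s ^ x - (1 + s) ^ x) 1 ≤
      (fun s : ℝ => c * s ^ x - (1 + s) ^ x) t :=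
    hmono (Set.self_mem_Ici) (Set.mem_Ici.mpr ht) ht
  simp only [Real.one_rpow, mul_one] at h1t
  have h11 : (1 + 1 : ℝ) = 2 := by norm_num
  rw [h11] at h1t
  rw [hc] at h1t ⊢
  linarith [h1t]
end

section
/- Let a₂, …, aₙ and c be nonnegative reals (n ≥ 3), r ≥ 1, k ≥ 1, 0 ≤ α ≤ r/2, and l = ((1+k)^(α/r) - (1/2)^(α/r))/k^(α/r). Suppose there exist nonnegative reals c₂ = c, c₃, …, cₙ with cᵢ^r ≥ aᵢ^r + c_{i+1}^r for i = 2, …, n-1 (where cₙ = aₙ), and suppose aᵢ^r ≥ k·c_{i+1}^r for i = 2, …, n-1. Then c^α ≥ l·(a₂^α + (1/2)^(α/r)·a₃^α + ⋯ + (1/2)^((n-3)α/r)·a_{n-1}^α) + (1/2)^((n-2)α/r)·aₙ^α. -/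
open Real Finset

private lemma step_ineq {k r α x y z : ℝ} (hk : 1 ≤ k) (hr : 1 ≤ r)
    (hα0 : 0 ≤ α) (hα : α ≤ r / 2) (hx : 0 ≤ x) (hy : 0 ≤ y) (hz : 0 ≤ z)
    (h : z ^ r ≥ x ^ r + y ^ r) (hxy : x ^ r ≥ k * y ^ r) :
    z ^ α ≥ (((1 + k) ^ (α / r) - (1 / 2 : ℝ) ^ (α / r)) / k ^ (α / r)) * x ^ α
      + (1 / 2 : ℝ) ^ (α / r) * y ^ α := by
  have hr0 : (0:ℝ) < r := by linarith
  have hk0 : (0:ℝ) < k := by linarith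
  have hk1 : (0:ℝ) < k + 1 := by linarith
  rcases eq_or_lt_of_le hα0 with hα' | hα'
  · -- α = 0
    simp [← hα', Real.rpow_zero, zero_div]
  set t : ℝ := α / r with htdef
  have ht0 : 0 < t := div_pos hα' hr0
  have ht : t ≤ 1 / 2 := by
    rw [htdef, div_le_div_iff₀ hr0 two_pos]; linarith
  have ht1 : t ≤ 1 := by linarith
  set L : ℝ := ((1 + k) ^ t - (1/2 : ℝ) ^ t) / k ^ t with hLdef
  -- coefficient bound: L ≤ (k/(k+1)) ^ (1-t)
  have h2t : (2:ℝ) ^ t ≤ (1 + k) ^ (1 - t) := by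
    calc (2:ℝ) ^ t ≤ (2:ℝ) ^ (1 - t) :=
          Real.rpow_le_rpow_of_exponent_le one_le_two (by linarith)
      _ ≤ (1 + k) ^ (1 - t) :=
          Real.rpow_le_rpow (by norm_num) (by linarith) (by linarith)
  have h2pos : (0:ℝ) < (2:ℝ) ^ t := Real.rpow_pos_of_pos two_pos t
  have hhalf : ((1:ℝ)/2) ^ t = ((2:ℝ) ^ t)⁻¹ := by
    rw [one_div, Real.inv_rpow (by norm_num : (0:ℝ) ≤ 2)]
  have ca : L ≤ (k / (k + 1)) ^ (1 - t) := by
    rw [hLdef, div_le_iff₀ (Real.rpow_pos_of_pos hk0 t)]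
    have e : (k / (k + 1)) ^ (1 - t) * k ^ t = k / (k + 1) ^ (1 - t) := by
      rw [Real.div_rpow hk0.le hk1.le, div_mul_eq_mul_div, ← Real.rpow_add hk0]
      norm_num
    rw [e, le_div_iff₀ (Real.rpow_pos_of_pos hk1 (1 - t))]
    have e2 : (1 + k) ^ t * (k + 1) ^ (1 - t) = 1 + k := by
      rw [show k + 1 = 1 + k by ring, ← Real.rpow_add (by linarith : (0:ℝ) < 1 + k)]
      norm_num
    have e3 : (1:ℝ) ≤ ((1:ℝ)/2) ^ t * (k + 1) ^ (1 - t) := by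
      rw [hhalf]
      have h4 : (2:ℝ) ^ t ≤ (k + 1) ^ (1 - t) := by
        rw [show k + 1 = 1 + k by ring]; exact h2t
      calc (1:ℝ) = ((2:ℝ) ^ t)⁻¹ * (2:ℝ) ^ t := by field_simp
        _ ≤ ((2:ℝ) ^ t)⁻¹ * (k + 1) ^ (1 - t) :=
            mul_le_mul_of_nonneg_left h4 (by positivity)
    nlinarith [e2, e3]
  -- monotone function argument
  set u : ℝ := x ^ r with hudef
  set v : ℝ := y ^ r with hvdef
  have hu0 : 0 ≤ u := Real.rpow_nonneg hx r
  have hv0 : 0 ≤ v := Real.rpow_nonneg hy r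
  have hkv0 : 0 ≤ k * v := by positivity
  have huk : k * v ≤ u := hxy
  have hg : MonotoneOn (fun w : ℝ => (w + v) ^ t - L * w ^ t) (Set.Ici (k * v)) := by
    apply monotoneOn_of_deriv_nonneg (convex_Ici _)
    · apply ContinuousOn.sub
      · exact (continuousOn_id.add continuousOn_const).rpow_const
          (fun w hw => Or.inr ht0.le)
      · exact continuousOn_const.mul (continuousOn_id.rpow_const (fun w hw => Or.inr ht0.le))
    · rw [interior_Ici]
      intro w hw
      have hw0 : 0 < w := lt_of_le_of_lt hkv0 hw
      have hwv : 0 < w + v := by linarith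
      have hd1 : HasDerivAt (fun w : ℝ => (w + v) ^ t) (t * (w + v) ^ (t - 1)) w := by
        have h0 : HasDerivAt (fun w : ℝ => w + v) 1 w := (hasDerivAt_id w).add_const v
        simpa [Function.comp_def] using (Real.hasDerivAt_rpow_const (p := t) (Or.inl hwv.ne')).comp w h0
      have hd2 : HasDerivAt (fun w : ℝ => L * w ^ t) (L * (t * w ^ (t - 1))) w :=
        (Real.hasDerivAt_rpow_const (p := t) (Or.inl hw0.ne')).const_mul L
      exact (hd1.sub hd2).differentiableAt.differentiableWithinAt
    · rw [interior_Ici]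
      intro w hw
      have hw0 : 0 < w := lt_of_le_of_lt hkv0 hw
      have hwv : 0 < w + v := by linarith
      have hd1 : HasDerivAt (fun w : ℝ => (w + v) ^ t) (t * (w + v) ^ (t - 1)) w := by
        have h0 : HasDerivAt (fun w : ℝ => w + v) 1 w := (hasDerivAt_id w).add_const v
        simpa [Function.comp_def] using (Real.hasDerivAt_rpow_const (p := t) (Or.inl hwv.ne')).comp w h0
      have hd2 : HasDerivAt (fun w : ℝ => L * w ^ t) (L * (t * w ^ (t - 1))) w :=
        (Real.hasDerivAt_rpow_const (p := t) (Or.inl hw0.ne')).const_mul L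
      rw [show (fun w => (w + v) ^ t - L * w ^ t) = ((fun w : ℝ => (w + v) ^ t) - fun w => L * w ^ t) from rfl, (hd1.sub hd2).deriv]
      -- L * w ^ (t-1) ≤ (w+v)^(t-1)
      have h1 : k / (k + 1) ≤ w / (w + v) := by
        rw [div_le_div_iff₀ hk1 hwv]
        have : k * v ≤ w := le_of_lt (lt_of_le_of_lt (le_refl _) hw)
        nlinarith
      have h2 : (k / (k + 1)) ^ (1 - t) ≤ (w / (w + v)) ^ (1 - t) :=
        Real.rpow_le_rpow (by positivity) h1 (by linarith)
      have h3 : (w / (w + v)) ^ (1 - t) = (w + v) ^ (t - 1) * w ^ (1 - t) := by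
        rw [Real.div_rpow hw0.le hwv.le, show t - 1 = -(1 - t) by ring,
          Real.rpow_neg hwv.le]
        ring
      have claim : L * w ^ (t - 1) ≤ (w + v) ^ (t - 1) := by
        have c1 : L * w ^ (t - 1) ≤ (k / (k + 1)) ^ (1 - t) * w ^ (t - 1) :=
          mul_le_mul_of_nonneg_right ca (Real.rpow_nonneg hw0.le _)
        have c2 : (k / (k + 1)) ^ (1 - t) * w ^ (t - 1) ≤ (w / (w + v)) ^ (1 - t) * w ^ (t - 1) :=
          mul_le_mul_of_nonneg_right h2 (Real.rpow_nonneg hw0.le _)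
        have c3 : (w / (w + v)) ^ (1 - t) * w ^ (t - 1) = (w + v) ^ (t - 1) := by
          rw [h3, mul_assoc, ← Real.rpow_add hw0]
          norm_num
        linarith
      have := mul_le_mul_of_nonneg_left claim ht0.le
      linarith
  have hmono := hg (Set.mem_Ici.2 (le_refl (k * v))) (Set.mem_Ici.2 huk) huk
  simp only [] at hmono
  -- g(k*v) = (1/2)^t * v^t
  have hgkv : (k * v + v) ^ t - L * (k * v) ^ t = (1/2 : ℝ) ^ t * v ^ t := by
    have e1 : k * v + v = (1 + k) * v := by ring
    rw [e1, Real.mul_rpow (by linarith : (0:ℝ) ≤ 1 + k) hv0,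
      Real.mul_rpow hk0.le hv0, hLdef]
    have : ((1 + k) ^ t - (1/2 : ℝ) ^ t) / k ^ t * (k ^ t * v ^ t)
        = ((1 + k) ^ t - (1/2 : ℝ) ^ t) * v ^ t := by
      field_simp
    rw [this]
    ring
  rw [hgkv] at hmono
  -- convert to α exponents
  have extx : (x ^ r) ^ t = x ^ α := by
    rw [← Real.rpow_mul hx, mul_div_cancel₀ α hr0.ne']
  have exty : (y ^ r) ^ t = y ^ α := by
    rw [← Real.rpow_mul hy, mul_div_cancel₀ α hr0.ne']
  have extz : (z ^ r) ^ t = z ^ α := by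
    rw [← Real.rpow_mul hz, mul_div_cancel₀ α hr0.ne']
  have hzu : (u + v) ^ t ≤ z ^ α := by
    rw [← extz]
    exact Real.rpow_le_rpow (by positivity) h ht0.le
  have final : L * x ^ α + (1/2 : ℝ) ^ t * y ^ α ≤ z ^ α := by
    rw [← extx, ← exty]
    have : (1/2 : ℝ) ^ t * v ^ t + L * u ^ t ≤ (u + v) ^ t := by linarith
    calc L * (x ^ r) ^ t + (1/2 : ℝ) ^ t * (y ^ r) ^ t
        = (1/2 : ℝ) ^ t * v ^ t + L * u ^ t := by rw [← hudef, ← hvdef]; ring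
      _ ≤ (u + v) ^ t := this
      _ ≤ z ^ α := hzu
  exact final

theorem theorem3_case3 (n : ℕ) (hn : 3 ≤ n) (a c : ℕ → ℝ) (r k α : ℝ)
    (hr : 1 ≤ r) (hk : 1 ≤ k) (hα0 : 0 ≤ α) (hα : α ≤ r / 2)
    (hapos : ∀ i, 2 ≤ i → i ≤ n → 0 ≤ a i)
    (hcpos : ∀ i, 3 ≤ i → i ≤ n → 0 < c i)
    (hcnonneg : ∀ i, 2 ≤ i → i ≤ n → 0 ≤ c i)
    (hcn : c n = a n)
    (hnest : ∀ i, 2 ≤ i → i ≤ n - 1 → c i ^ r ≥ a i ^ r + c (i + 1) ^ r)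
    (hcond : ∀ i, 2 ≤ i → i ≤ n - 1 → a i ^ r ≥ k * c (i + 1) ^ r) :
    c 2 ^ α ≥
      (((1 + k) ^ (α / r) - (1 / 2 : ℝ) ^ (α / r)) / k ^ (α / r)) *
        (∑ i ∈ Finset.Icc 2 (n - 1), (1 / 2 : ℝ) ^ ((i - 2 : ℕ) * α / r) * a i ^ α) +
      (1 / 2 : ℝ) ^ ((n - 2 : ℕ) * α / r) * a n ^ α := by
  have main : ∀ d m : ℕ, 2 ≤ m → m + d = n - 1 →
      c m ^ α ≥ (((1 + k) ^ (α / r) - (1 / 2 : ℝ) ^ (α / r)) / k ^ (α / r)) *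
        (∑ i ∈ Finset.Icc m (n - 1), (1 / 2 : ℝ) ^ ((i - m : ℕ) * α / r) * a i ^ α) +
      (1 / 2 : ℝ) ^ ((n - m : ℕ) * α / r) * a n ^ α := by
    intro d
    induction d with
    | zero =>
      intro m hm2 hmd
      have hm : m = n - 1 := by omega
      subst hm
      have e1 : n - 1 + 1 = n := by omega
      have hstep := step_ineq hk hr hα0 hα (hapos (n-1) hm2 (by omega))
        (by rw [e1]; exact hcnonneg n (by omega) le_rfl)
        (hcnonneg (n-1) hm2 (by omega))
        (hnest (n-1) hm2 le_rfl) (hcond (n-1) hm2 le_rfl)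
      rw [e1, hcn] at hstep
      rw [Finset.Icc_self, Finset.sum_singleton, Nat.sub_self,
        show n - (n-1) = 1 from by omega]
      push_cast
      rw [zero_mul, zero_div, Real.rpow_zero, one_mul, one_mul]
      exact hstep
    | succ d ih =>
      intro m hm2 hmd
      have IH := ih (m+1) (by omega) (by omega)
      have hstep := step_ineq hk hr hα0 hα (hapos m hm2 (by omega))
        (hcnonneg (m+1) (by omega) (by omega)) (hcnonneg m hm2 (by omega))
        (hnest m hm2 (by omega)) (hcond m hm2 (by omega))
      have hhalf0 : (0:ℝ) ≤ (1/2:ℝ) ^ (α/r) := Real.rpow_nonneg (by norm_num) _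
      have hscaled := mul_le_mul_of_nonneg_left IH hhalf0
      have hmle : m ≤ n - 1 := by omega
      rw [Finset.Icc_eq_cons_Ioc hmle, Finset.sum_cons, ← Finset.Icc_add_one_left_eq_Ioc]
      have hterm : ∀ i ∈ Finset.Icc (m+1) (n-1),
          (1/2:ℝ) ^ ((i - m : ℕ) * α / r) * a i ^ α
          = (1/2:ℝ) ^ (α/r) * ((1/2:ℝ) ^ ((i - (m+1) : ℕ) * α / r) * a i ^ α) := by
        intro i hi
        simp only [Finset.mem_Icc] at hi
        rw [show i - m = (i - (m+1)) + 1 from by omega, ← mul_assoc]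
        congr 1
        rw [← Real.rpow_add (by norm_num : (0:ℝ) < 1/2)]
        congr 1
        push_cast
        ring
      rw [Finset.sum_congr rfl hterm, ← Finset.mul_sum, Nat.sub_self]
      have e2 : (1/2:ℝ) ^ (((n - m : ℕ) : ℝ) * α / r)
          = (1/2:ℝ)^(α/r) * (1/2:ℝ) ^ (((n - (m+1) : ℕ) : ℝ) * α / r) := by
        rw [show n - m = (n - (m+1)) + 1 from by omega,
          ← Real.rpow_add (by norm_num : (0:ℝ) < 1/2)]
        congr 1
        push_cast
        ring
      rw [e2]
      push_cast
      rw [zero_mul, zero_div, Real.rpow_zero, one_mul]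
      nlinarith [hstep, hscaled]
  have := main (n - 3) 2 le_rfl (by omega)
  exact this
end

section
/- Let a₂, …, aₙ and c be nonnegative reals (n ≥ 3), 0 < s, β ≥ max{1,s}, k ≥ 1, and l = ((1+k)^(β/s) - (1/2)^(β/s))/k^(β/s). Suppose c^s ≤ a₂^s + ⋯ + aₙ^s, and suppose k·aᵢ^s ≤ a_{i+1}^s + ⋯ + aₙ^s for i = 2, …, n-1, with aᵢ > 0 for all i. Then c^β ≤ (1/2)^(β/s)·(a₂^β + l·a₃^β + ⋯ + l^(n-3)·a_{n-1}^β) + l^(n-2)·aₙ^β. -/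
private lemma convex_step (t a b T : ℝ) (ht : 1 ≤ t) (ha : 0 ≤ a) (hab : a ≤ b)
    (hT : 0 ≤ T) : (a + T) ^ t + b ^ t ≤ a ^ t + (b + T) ^ t := by
  rcases eq_or_lt_of_le (show a ≤ b + T by linarith) with h | h
  · have hT0 : T = 0 := by linarith
    have hab' : a = b := by linarith
    simp [hT0, hab']
  · have hdpos : (0:ℝ) < b + T - a := by linarith
    set μ := (b - a) / (b + T - a) with hμ
    have hμ0 : 0 ≤ μ := div_nonneg (by linarith) hdpos.le
    have hμ1 : μ ≤ 1 := (div_le_one hdpos).mpr (by linarith)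
    have hμd : μ * (b + T - a) = b - a := div_mul_cancel₀ _ hdpos.ne'
    have hconv := convexOn_rpow ht
    have hmem1 : a ∈ Set.Ici (0:ℝ) := Set.mem_Ici.mpr ha
    have hmem2 : b + T ∈ Set.Ici (0:ℝ) := Set.mem_Ici.mpr (by linarith)
    have h1 := hconv.2 hmem1 hmem2 hμ0 (by linarith : (0:ℝ) ≤ 1 - μ) (by ring)
    have h2 := hconv.2 hmem1 hmem2 (by linarith : (0:ℝ) ≤ 1 - μ) hμ0 (by ring)
    simp only [smul_eq_mul] at h1 h2
    have e1 : μ * a + (1 - μ) * (b + T) = a + T := by nlinarith [hμd]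
    have e2 : (1 - μ) * a + μ * (b + T) = b := by nlinarith [hμd]
    rw [e1] at h1
    rw [e2] at h2
    linarith

private lemma key_step (t k A T : ℝ) (ht : 1 ≤ t) (hk : 1 ≤ k) (hA : 0 ≤ A)
    (hT : 0 < T) (hAT : k * A ≤ T) :
    (A + T) ^ t ≤ (1/2:ℝ) ^ t * A ^ t + (((1+k)^t - (1/2:ℝ)^t) / k ^ t) * T ^ t := by
  have hk0 : (0:ℝ) < k := by linarith
  have hB : A ≤ T / k := (le_div_iff₀ hk0).mpr (by linarith [mul_comm k A])
  have h1 := convex_step t A (T/k) T ht hA hB hT.le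
  have hhalf : (1/2:ℝ)^t ≤ 1 := Real.rpow_le_one (by norm_num) (by norm_num) (by linarith)
  have hhalf0 : (0:ℝ) ≤ (1/2:ℝ)^t := Real.rpow_nonneg (by norm_num) t
  have hAB : A^t ≤ (T/k)^t := Real.rpow_le_rpow hA hB (by linarith)
  have e1 : (T/k + T)^t = (1+k)^t * (T^t / k^t) := by
    rw [show T/k + T = ((1+k) * T)/k by field_simp,
        Real.div_rpow (by positivity) hk0.le, Real.mul_rpow (by linarith) hT.le]
    ring
  have e2 : (T/k)^t = T^t / k^t := Real.div_rpow hT.le hk0.le t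
  have e3 : (((1+k)^t - (1/2:ℝ)^t) / k ^ t) * T ^ t
      = (1+k)^t * (T^t / k^t) - (1/2:ℝ)^t * (T^t/k^t) := by ring
  rw [e1, e2] at h1
  rw [e3]
  rw [e2] at hAB
  nlinarith [mul_nonneg (sub_nonneg.mpr hhalf) (sub_nonneg.mpr hAB)]

theorem theorem6_case2 (n : ℕ) (hn : 3 ≤ n) (a : ℕ → ℝ) (c s k β : ℝ)
    (hs : 0 < s) (hk : 1 ≤ k) (hβ : max 1 s ≤ β)
    (hc : 0 ≤ c)
    (hapos : ∀ i, 2 ≤ i → i ≤ n → 0 < a i)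
    (hcs : c ^ s ≤ ∑ i ∈ Finset.Icc 2 n, a i ^ s)
    (hcond : ∀ i, 2 ≤ i → i ≤ n - 1 →
      k * a i ^ s ≤ ∑ j ∈ Finset.Icc (i + 1) n, a j ^ s) :
    c ^ β ≤
      (1 / 2 : ℝ) ^ (β / s) *
        (∑ i ∈ Finset.Icc 2 (n - 1),
          (((1 + k) ^ (β / s) - (1 / 2 : ℝ) ^ (β / s)) / k ^ (β / s)) ^ (i - 2) * a i ^ β) +
      (((1 + k) ^ (β / s) - (1 / 2 : ℝ) ^ (β / s)) / k ^ (β / s)) ^ (n - 2) * a n ^ β := by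
  set t := β / s with htdef
  have hβs : s ≤ β := le_trans (le_max_right 1 s) hβ
  have ht1 : 1 ≤ t := by rw [htdef, le_div_iff₀ hs]; linarith
  have ht0 : 0 ≤ t := by linarith
  have hβst : β = s * t := by rw [htdef, mul_div_assoc']; exact (mul_div_cancel_left₀ β hs.ne').symm
  set l := ((1 + k) ^ t - (1/2:ℝ) ^ t) / k ^ t with hl
  have hk0 : (0:ℝ) < k := by linarith
  have hl1 : 1 ≤ l := by
    have hsup := convex_step t 0 k 1 ht1 le_rfl (by linarith) zero_le_one
    rw [Real.zero_rpow (by linarith : t ≠ 0)] at hsup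
    have h1 : (0:ℝ) + 1 = 1 := by ring
    rw [h1, Real.one_rpow] at hsup
    have hhalf : (1/2:ℝ)^t ≤ 1 := Real.rpow_le_one (by norm_num) (by norm_num) ht0
    rw [hl, le_div_iff₀ (Real.rpow_pos_of_pos hk0 t)]
    have : k + 1 = 1 + k := by ring
    rw [this] at hsup
    linarith
  have hl0 : 0 ≤ l := by linarith
  have Spos : ∀ m, 2 ≤ m → m ≤ n → 0 < ∑ j ∈ Finset.Icc m n, a j ^ s := by
    intro m h2 hmn
    apply Finset.sum_pos
    · intro j hj
      rw [Finset.mem_Icc] at hj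
      exact Real.rpow_pos_of_pos (hapos j (le_trans h2 hj.1) hj.2) s
    · exact Finset.nonempty_Icc.mpr hmn
  have Ssplit : ∀ m, m ≤ n → ∑ j ∈ Finset.Icc m n, a j ^ s
      = a m ^ s + ∑ j ∈ Finset.Icc (m+1) n, a j ^ s := by
    intro m hmn
    rw [Finset.Icc_add_one_left_eq_Ioc, Finset.Icc_eq_cons_Ioc hmn, Finset.sum_cons]
  have main : ∀ m, 2 ≤ m → m ≤ n →
      (∑ j ∈ Finset.Icc 2 n, a j ^ s) ^ t ≤
        (1/2:ℝ)^t * ∑ i ∈ Finset.Icc 2 (m-1), l^(i-2) * a i ^ β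
          + l^(m-2) * (∑ j ∈ Finset.Icc m n, a j ^ s)^t := by
    intro m h2
    induction m, h2 using Nat.le_induction with
    | base =>
      intro _
      rw [show Finset.Icc 2 1 = (∅ : Finset ℕ) from Finset.Icc_eq_empty (by omega)]
      simp
    | succ m hm ih =>
      intro hmn
      obtain ⟨p, rfl⟩ : ∃ p, m = p + 2 := ⟨m - 2, by omega⟩
      have hmn' : p + 2 ≤ n := by omega
      have hih := ih hmn'
      have hS1pos := Spos (p+3) (by omega) hmn
      have hkey := key_step t k (a (p+2) ^ s) (∑ j ∈ Finset.Icc (p+3) n, a j ^ s)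
        ht1 hk (Real.rpow_nonneg (hapos (p+2) (by omega) hmn').le s) hS1pos
        (hcond (p+2) (by omega) (by omega))
      rw [Ssplit (p+2) hmn'] at hih
      have ham : (a (p+2) ^ s) ^ t = a (p+2) ^ β := by
        rw [← Real.rpow_mul (hapos (p+2) (by omega) hmn').le, ← hβst]
      simp only [show p + 2 - 1 = p + 1 from by omega, show p + 2 - 2 = p from by omega] at hih
      simp only [show p + 3 - 1 = p + 2 from by omega, show p + 3 - 2 = p + 1 from by omega]
      have hkey' : (a (p+2) ^ s + ∑ j ∈ Finset.Icc (p+3) n, a j ^ s) ^ t ≤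
          (1/2:ℝ)^t * a (p+2) ^ β + l * (∑ j ∈ Finset.Icc (p+3) n, a j ^ s) ^ t := by
        rw [← ham, hl]; exact hkey
      have hsum : ∑ i ∈ Finset.Icc 2 (p+2), l^(i-2) * a i ^ β
          = (∑ i ∈ Finset.Icc 2 (p+1), l^(i-2) * a i ^ β) + l^p * a (p+2) ^ β := by
        rw [Finset.Icc_eq_cons_Ico (show 2 ≤ p+2 by omega), Finset.sum_cons,
          show Finset.Ico 2 (p+2) = Finset.Ico 2 (p+1+1) from rfl,
          Finset.Ico_add_one_right_eq_Icc, show p + 2 - 2 = p from by omega]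
        ring
      calc (∑ j ∈ Finset.Icc 2 n, a j ^ s) ^ t
          ≤ (1/2:ℝ)^t * ∑ i ∈ Finset.Icc 2 (p+1), l^(i-2) * a i ^ β
            + l^p * (a (p+2) ^ s + ∑ j ∈ Finset.Icc (p+3) n, a j ^ s) ^ t := hih
        _ ≤ (1/2:ℝ)^t * ∑ i ∈ Finset.Icc 2 (p+1), l^(i-2) * a i ^ β
            + l^p * ((1/2:ℝ)^t * a (p+2) ^ β + l * (∑ j ∈ Finset.Icc (p+3) n, a j ^ s) ^ t) :=
            add_le_add_right (mul_le_mul_of_nonneg_left hkey' (pow_nonneg hl0 p)) _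
        _ = (1/2:ℝ)^t * ∑ i ∈ Finset.Icc 2 (p+2), l^(i-2) * a i ^ β
            + l^(p+1) * (∑ j ∈ Finset.Icc (p+3) n, a j ^ s) ^ t := by rw [hsum]; ring
  have hfin := main n (by omega) le_rfl
  rw [Finset.Icc_self, Finset.sum_singleton] at hfin
  have han : (a n ^ s) ^ t = a n ^ β := by
    rw [← Real.rpow_mul (hapos n (by omega) le_rfl).le, ← hβst]
  rw [han] at hfin
  calc c ^ β = (c ^ s) ^ t := by rw [hβst, Real.rpow_mul hc]
    _ ≤ (∑ j ∈ Finset.Icc 2 n, a j ^ s) ^ t :=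
        Real.rpow_le_rpow (Real.rpow_nonneg hc s) hcs ht0
    _ ≤ _ := hfin
end
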